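/- p-adic Bernstein inequality: Let P(x) = a_d x^d + ... + a₀ be a polynomial of degree d ≥ 1 with coefficients in ℚ_p, let r ∈ p^ℤ, and let Ω = { x ∈ ℚ_p : |P(x)|_p ≤ r }. Then Ω can be covered by O_d(1) balls B such that on each ball B one has sup_{x∈B} |P'(x)|_p ≲_d r / μ(B), where μ is the Haar measure on ℚ_p normalized so that μ(ℤ_p) = 1. -/

import Mathlib

open Polynomial

namespace Stmt9Aux

lemma val_multiset_sum_le {L : Type*} [Field L] {Γ : Type*} [LinearOrderedCommGroupWithZero Γ]
    (v : Valuation L Γ) (s : Multiset L) (B : Γ) (h : ∀ y ∈ s, v y ≤ B) : v s.sum ≤ B := by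
  induction s using Multiset.induction_on with
  | empty => simpa using zero_le'
  | cons a t ih =>
    rw [Multiset.sum_cons]
    exact le_trans (v.map_add _ _)
      (max_le (h a (Multiset.mem_cons_self _ _)) (ih fun y hy => h y (Multiset.mem_cons_of_mem hy)))

variable {p : ℕ} [Fact p.Prime]

lemma p_real_gt_one : (1:ℝ) < (p:ℝ) := by
  exact_mod_cast (Fact.out : p.Prime).one_lt

lemma norm_le_step {x : ℚ_[p]} {k : ℤ} (h : ‖x‖ < (p:ℝ)^(k+1)) : ‖x‖ ≤ (p:ℝ)^k := by
  have hp1 : (1:ℝ) < (p:ℝ) := p_real_gt_one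
  rcases eq_or_ne x 0 with rfl | hx
  · rw [norm_zero]
    positivity
  · rw [Padic.norm_eq_zpow_neg_valuation hx] at h ⊢
    have h2 : -x.valuation < k + 1 := (zpow_lt_zpow_iff_right₀ hp1).mp h
    exact zpow_le_zpow_right₀ hp1.le (by omega)

lemma key (d : ℕ) (hd : 1 ≤ d) (P : Polynomial ℚ_[p]) (hP : P.natDegree = d) (n : ℤ) :
    ∃ (m : ℕ) (c : Fin m → ℚ_[p]) (k : Fin m → ℤ),
      m ≤ d ∧
      ({x : ℚ_[p] | ‖Polynomial.eval x P‖ ≤ (p : ℝ) ^ n} ⊆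
        ⋃ i : Fin m, {y : ℚ_[p] | ‖y - c i‖ ≤ (p : ℝ) ^ (k i)}) ∧
      ∀ i : Fin m, ∀ y : ℚ_[p], ‖y - c i‖ ≤ (p : ℝ) ^ (k i) →
        ‖Polynomial.eval y P.derivative‖ ≤ (p : ℝ) ^ n / (p : ℝ) ^ (k i) := by
  classical
  have hp1 : (1:ℝ) < (p:ℝ) := p_real_gt_one
  have hp0 : (0:ℝ) < (p:ℝ) := lt_trans one_pos hp1
  have hpne : (p:ℝ) ≠ 0 := ne_of_gt hp0
  -- trivial case : empty sublevel set
  by_cases hΩ : ∀ x : ℚ_[p], ¬ ‖Polynomial.eval x P‖ ≤ (p : ℝ) ^ n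
  · refine ⟨0, Fin.elim0, Fin.elim0, Nat.zero_le _, ?_, fun i => i.elim0⟩
    intro x hx
    exact absurd hx (hΩ x)
  push_neg at hΩ
  have hPne : P ≠ 0 := by
    intro h
    rw [h, natDegree_zero] at hP
    omega
  have hlc : P.leadingCoeff ≠ 0 := leadingCoeff_ne_zero.mpr hPne
  -- top Taylor coefficient
  have hcd : ∀ x : ℚ_[p], ((taylor x) P).coeff d = P.leadingCoeff := by
    intro x
    have h1 : ((taylor x) P).natDegree = d := by rw [natDegree_taylor, hP]
    have h2 : ((taylor x) P).coeff d = ((taylor x) P).leadingCoeff := by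
      rw [Polynomial.leadingCoeff, h1]
    rw [h2, taylor_apply, leadingCoeff_comp (by rw [natDegree_X_add_C]; omega)]
    simp
  -- existence of good radii
  have hGex : ∀ x : ℚ_[p], ∃ kk : ℤ, ∀ j : ℕ, 1 ≤ j → j ≤ d →
      ‖((taylor x) P).coeff j‖ * (p:ℝ)^((j:ℤ)*kk) ≤ (p:ℝ)^n := by
    intro x
    have hne : (Finset.Icc 1 d).Nonempty := ⟨1, by simp [hd]⟩
    set k1 : ℤ := (Finset.Icc 1 d).inf' hne
      (fun j => if ((taylor x) P).coeff j = 0 then 0 else n + (((taylor x) P).coeff j).valuation)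
      with hk1
    refine ⟨min k1 0, ?_⟩
    intro j hj1 hjd
    rcases eq_or_ne (((taylor x) P).coeff j) 0 with h0 | h0
    · rw [h0, norm_zero, zero_mul]
      positivity
    · have hval : min k1 0 ≤ n + (((taylor x) P).coeff j).valuation := by
        refine le_trans (min_le_left _ _) ?_
        have h3 := Finset.inf'_le
          (f := fun j => if ((taylor x) P).coeff j = 0 then 0
            else n + (((taylor x) P).coeff j).valuation)
          (Finset.mem_Icc.mpr ⟨hj1, hjd⟩)
        rw [← hk1] at h3
        simpa [h0] using h3
      have hk0 : min k1 0 ≤ 0 := min_le_right _ _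
      have hjz : (1:ℤ) ≤ (j:ℤ) := by exact_mod_cast hj1
      have hmul : (j:ℤ) * (min k1 0) ≤ n + (((taylor x) P).coeff j).valuation := by nlinarith
      rw [Padic.norm_eq_zpow_neg_valuation h0, ← zpow_add₀ hpne]
      apply zpow_le_zpow_right₀ hp1.le
      linarith
  -- uniform upper bound on good radii
  have hK0 : ∀ (x : ℚ_[p]) (k : ℤ), (∀ j : ℕ, 1 ≤ j → j ≤ d →
      ‖((taylor x) P).coeff j‖ * (p:ℝ)^((j:ℤ)*k) ≤ (p:ℝ)^n) →
      k ≤ |n + P.leadingCoeff.valuation| := by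
    intro x k hGk
    have h := hGk d hd le_rfl
    rw [hcd x, Padic.norm_eq_zpow_neg_valuation hlc, ← zpow_add₀ hpne] at h
    have h2 : -(P.leadingCoeff.valuation) + (d:ℤ)*k ≤ n := (zpow_le_zpow_iff_right₀ hp1).mp h
    have hdk : (d:ℤ)*k ≤ n + P.leadingCoeff.valuation := by linarith
    rcases le_or_gt k 0 with h3 | h3
    · exact le_trans h3 (abs_nonneg _)
    · have hd1 : (1:ℤ) ≤ (d:ℤ) := by exact_mod_cast hd
      have h4 : k ≤ (d:ℤ)*k := by nlinarith
      exact le_trans h4 (le_trans hdk (le_abs_self _))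
  -- maximal good radius
  have hKex : ∀ x : ℚ_[p], ∃ kk : ℤ,
      (∀ j : ℕ, 1 ≤ j → j ≤ d → ‖((taylor x) P).coeff j‖ * (p:ℝ)^((j:ℤ)*kk) ≤ (p:ℝ)^n) ∧
      ∀ k' : ℤ, (∀ j : ℕ, 1 ≤ j → j ≤ d →
        ‖((taylor x) P).coeff j‖ * (p:ℝ)^((j:ℤ)*k') ≤ (p:ℝ)^n) → k' ≤ kk := by
    intro x
    obtain ⟨ub, h1, h2⟩ := Int.exists_greatest_of_bdd
      (P := fun kk => ∀ j : ℕ, 1 ≤ j → j ≤ d →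
        ‖((taylor x) P).coeff j‖ * (p:ℝ)^((j:ℤ)*kk) ≤ (p:ℝ)^n)
      ⟨|n + P.leadingCoeff.valuation|, fun z hz => hK0 x z hz⟩ (hGex x)
    exact ⟨ub, h1, h2⟩
  choose K hKgood hKmax using hKex
  -- derivative bound on balls
  have hderiv : ∀ x y : ℚ_[p], ‖y - x‖ ≤ (p:ℝ)^(K x) →
      ‖P.derivative.eval y‖ ≤ (p:ℝ)^n / (p:ℝ)^(K x) := by
    intro x y hy
    have hQe : P.derivative.eval y = ((taylor x) P.derivative).eval (y - x) := by
      rw [taylor_eval, sub_add_cancel]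
    rw [hQe, eval_eq_sum_range]
    apply IsUltrametricDist.norm_sum_le_of_forall_le_of_nonneg (by positivity)
    intro i hi
    have hideg : i + 1 ≤ d := by
      have h1 : ((taylor x) P.derivative).natDegree = P.derivative.natDegree :=
        natDegree_taylor _ _
      have h2 : P.derivative.natDegree < d := hP ▸ natDegree_derivative_lt (by omega)
      have h3 := Finset.mem_range.mp hi
      omega
    have htd : (taylor x) P.derivative = derivative ((taylor x) P) := by
      rw [taylor_apply, taylor_apply, derivative_comp, derivative_X_add_C, one_mul]
    have hcoeff : ((taylor x) P.derivative).coeff i = ((taylor x) P).coeff (i+1) * ((i:ℚ_[p]) + 1) := by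
      rw [htd, coeff_derivative]
    rw [hcoeff]
    have hn1 : ‖((i:ℚ_[p])+1)‖ ≤ 1 := by
      have h := Padic.norm_int_le_one (p := p) ((i:ℤ)+1)
      have h2 : (((i:ℤ)+1 : ℤ) : ℚ_[p]) = ((i:ℚ_[p])+1) := by push_cast; ring
      rwa [h2] at h
    have hyx : ‖y-x‖^(i:ℕ) ≤ ((p:ℝ)^(K x))^(i:ℕ) := pow_le_pow_left₀ (norm_nonneg _) hy i
    have hgood := hKgood x (i+1) (by omega) hideg
    rw [norm_mul, norm_mul, norm_pow]
    rw [div_eq_mul_inv, ← zpow_neg]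
    calc ‖((taylor x) P).coeff (i+1)‖ * ‖(i:ℚ_[p])+1‖ * ‖y-x‖^(i:ℕ)
        ≤ ‖((taylor x) P).coeff (i+1)‖ * 1 * ((p:ℝ)^(K x))^(i:ℕ) := by
          apply mul_le_mul
          · exact mul_le_mul_of_nonneg_left hn1 (norm_nonneg _)
          · exact hyx
          · positivity
          · positivity
      _ = ‖((taylor x) P).coeff (i+1)‖ * (p:ℝ)^(((i:ℤ)+1) * (K x)) * (p:ℝ)^(-(K x)) := by
          rw [mul_one, ← zpow_natCast ((p:ℝ)^(K x)) i, ← zpow_mul, mul_assoc,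
            ← zpow_add₀ hpne]
          congr 2
          ring
      _ ≤ (p:ℝ)^n * (p:ℝ)^(-(K x)) := by
          apply mul_le_mul_of_nonneg_right _ (by positivity)
          have : (((i+1:ℕ)):ℤ) = (i:ℤ)+1 := by push_cast; ring
          rw [this] at hgood
          exact hgood
  -- the splitting field and a valuation on it
  set L := P.SplittingField with hL
  set φ : ℚ_[p] →+* L := algebraMap ℚ_[p] L with hφ
  have hφinj : Function.Injective φ := φ.injective
  have hsp : (P.map φ).Splits :=
    SplittingField.splits P
  set Q : Polynomial L := P.map φ with hQdef
  set R : Multiset L := Q.roots with hR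
  have hcardR : Multiset.card R = d := by
    rw [hR, (splits_iff_card_roots).mp hsp, hQdef, natDegree_map, hP]
  set f : ℤ_[p] →+* L := φ.comp (PadicInt.Coe.ringHom) with hf
  obtain ⟨A, hA, hloc⟩ := IsLocalRing.exists_factor_valuationRing f
  set v := A.valuation with hv
  -- membership transfer
  have hmem : ∀ u : ℚ_[p], ‖u‖ ≤ 1 → φ u ∈ A := by
    intro u hu
    exact hA ⟨u, hu⟩
  have hmem' : ∀ u : ℚ_[p], φ u ∈ A → ‖u‖ ≤ 1 := by
    intro u hu
    by_contra hgt
    push_neg at hgt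
    have hu0 : u ≠ 0 := by
      intro h
      rw [h, norm_zero] at hgt
      linarith
    have hwnorm : ‖(u⁻¹ : ℚ_[p])‖ ≤ 1 := by
      rw [norm_inv]
      exact inv_le_one_of_one_le₀ hgt.le
    set w : ℤ_[p] := (⟨u⁻¹, hwnorm⟩ : ℤ_[p]) with hwdef
    have hunit : IsUnit (f.codRestrict A.toSubring hA w) := by
      rw [isUnit_iff_exists_inv]
      refine ⟨⟨φ u, hu⟩, ?_⟩
      apply Subtype.ext
      show f w * φ u = 1
      have hfw : f w = φ u⁻¹ := rfl
      rw [hfw, ← map_mul, inv_mul_cancel₀ hu0, map_one]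
    have hUnit2 : IsUnit w := hloc.map_nonunit _ hunit
    have h1 : ‖w‖ = 1 := PadicInt.isUnit_iff.mp hUnit2
    rw [PadicInt.norm_def] at h1
    have h2 : ‖(u⁻¹ : ℚ_[p])‖ = 1 := h1
    rw [norm_inv, inv_eq_one] at h2
    linarith
  -- norm comparison
  have hcmp : ∀ a b : ℚ_[p], v (φ a) ≤ v (φ b) ↔ ‖a‖ ≤ ‖b‖ := by
    intro a b
    rcases eq_or_ne b 0 with rfl | hb
    · rw [map_zero, map_zero, norm_zero]
      constructor
      · intro h
        have h0 : v (φ a) = 0 := le_antisymm (by simpa using h) zero_le'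
        have h1 : φ a = 0 := (Valuation.zero_iff v).mp h0
        have h2 : a = 0 := by
          apply hφinj
          rw [h1, map_zero]
        rw [h2, norm_zero]
      · intro h
        have : a = 0 := norm_le_zero_iff.mp h
        rw [this, map_zero, map_zero]
    · have hb' : φ b ≠ 0 := fun h => hb (by apply hφinj; rw [h, map_zero])
      have hvb : (0 : A.ValueGroup) < v (φ b) := zero_lt_iff.mpr ((Valuation.ne_zero_iff v).mpr hb')
      rw [← div_le_one₀ hvb, ← map_div₀ v, ← map_div₀ φ]
      rw [hv, ValuationSubring.valuation_le_one_iff]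
      constructor
      · intro h
        have h2 := hmem' _ h
        rwa [norm_div, div_le_one (norm_pos_iff.mpr hb)] at h2
      · intro h
        apply hmem
        rwa [norm_div, div_le_one (norm_pos_iff.mpr hb)]
  have hcmplt : ∀ a b : ℚ_[p], v (φ a) < v (φ b) ↔ ‖a‖ < ‖b‖ := by
    intro a b
    exact lt_iff_lt_of_le_iff_le (hcmp b a)
  -- nearest root
  have hRne : R.toFinset.Nonempty := by
    rw [Multiset.toFinset_nonempty]
    intro h
    rw [h] at hcardR
    simp at hcardR
    omega
  have hzex : ∀ x : ℚ_[p], ∃ z ∈ R.toFinset, ∀ w ∈ R.toFinset, v (φ x - z) ≤ v (φ x - w) :=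
    fun x => Finset.exists_min_image R.toFinset (fun z => v (φ x - z)) hRne
  choose z hzmem hzmin using hzex
  -- key valuation inequality
  have hkey : ∀ (x : ℚ_[p]) (j : ℕ), 1 ≤ j → j ≤ d →
      v (φ (((taylor x) P).coeff j)) * (v (φ x - z x))^j ≤ v (φ (P.eval x)) := by
    intro x j hj1 hjd
    have hfac : Q = C Q.leadingCoeff * (R.map fun a => X - C a).prod :=
      hsp.eq_prod_roots
    -- evaluation side
    have heval : φ (P.eval x) = Q.eval (φ x) := by
      rw [hQdef, eval_map, eval₂_at_apply]
    have hevalv : v (φ (P.eval x)) = v Q.leadingCoeff * ((R.map fun a => v (φ x - a)).prod) := by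
      rw [heval]
      conv_lhs => rw [hfac]
      rw [eval_mul, eval_C, v.map_mul, eval_multiset_prod, Multiset.map_map,
        map_multiset_prod v, Multiset.map_map]
      congr 2
      apply Multiset.map_congr rfl
      intro a _
      simp
    -- Taylor side
    have htayQ : (taylor (φ x)) Q = ((taylor x) P).map φ := by
      rw [taylor_apply, taylor_apply, hQdef, Polynomial.map_comp]
      congr 1
      simp
    have hcQ : φ (((taylor x) P).coeff j) = ((taylor (φ x)) Q).coeff j := by
      rw [htayQ, coeff_map]
    have hcomp : (taylor (φ x)) Q = C Q.leadingCoeff * ((R.map fun a => a - φ x).map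
        (fun t => X - C t)).prod := by
      rw [taylor_apply]
      conv_lhs => rw [hfac]
      rw [mul_comp, C_comp, multiset_prod_comp, Multiset.map_map, Multiset.map_map]
      congr 2
      apply Multiset.map_congr rfl
      intro a _
      show (X - C a).comp (X + C (φ x)) = X - C (a - φ x)
      rw [sub_comp, X_comp, C_comp, C_sub]
      ring
    have hcards : Multiset.card (R.map fun a => a - φ x) = d := by
      rw [Multiset.card_map, hcardR]
    have hcoeffj : ((taylor (φ x)) Q).coeff j
        = Q.leadingCoeff * ((-1)^(d-j) * (R.map fun a => a - φ x).esymm (d-j)) := by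
      rw [hcomp, coeff_C_mul]
      congr 1
      have h5 := Multiset.prod_X_sub_C_coeff (R.map fun a => a - φ x) (k := j)
        (by rw [hcards]; omega)
      rw [hcards] at h5
      exact h5
    -- term bound
    set vd := v (φ x - z x) with hvd
    set W := (R.map fun a => v (φ x - a)).prod with hW
    rcases eq_or_ne vd 0 with hvd0 | hvd0
    · rw [hvd0, zero_pow (by omega : j ≠ 0), mul_zero]
      exact zero_le'
    · have hterm : ∀ t ∈ (R.map fun a => a - φ x).powersetCard (d - j),
          v t.prod * vd^j ≤ W := by
        intro t ht
        rw [Multiset.mem_powersetCard] at ht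
        obtain ⟨hle, hcardt⟩ := ht
        obtain ⟨u, hu⟩ := Multiset.le_iff_exists_add.mp hle
        have hcardu : Multiset.card u = j := by
          have h6 := congrArg Multiset.card hu
          rw [Multiset.card_add, hcards, hcardt] at h6
          omega
        have h1 : vd ^ j ≤ (u.map v).prod := by
          have h7 : Multiset.card (u.map v) = j := by rw [Multiset.card_map, hcardu]
          rw [← h7]
          apply Multiset.pow_card_le_prod
          intro y hy
          obtain ⟨w, hw, rfl⟩ := Multiset.mem_map.mp hy
          have hwR : w ∈ (R.map fun a => a - φ x) := by
            rw [hu]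
            exact Multiset.mem_add.mpr (Or.inr hw)
          obtain ⟨a, haR, rfl⟩ := Multiset.mem_map.mp hwR
          have h8 : v (a - φ x) = v (φ x - a) := by
            rw [← Valuation.map_neg]
            congr 1
            ring
          rw [h8]
          exact hzmin x a (Multiset.mem_toFinset.mpr haR)
        calc v t.prod * vd^j ≤ (t.map v).prod * (u.map v).prod := by
              rw [map_multiset_prod v]
              exact mul_le_mul_right h1 _
          _ = W := by
              rw [← Multiset.prod_add, ← Multiset.map_add, ← hu, hW, Multiset.map_map]
              congr 1
              apply Multiset.map_congr rfl
              intro a _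
              show v (a - φ x) = v (φ x - a)
              rw [← Valuation.map_neg]
              congr 1
              ring
      have hvdpow : (0 : A.ValueGroup) < vd ^ j := zero_lt_iff.mpr (pow_ne_zero _ hvd0)
      have hsum : v ((R.map fun a => a - φ x).esymm (d-j)) ≤ W / vd^j := by
        apply val_multiset_sum_le
        intro y hy
        obtain ⟨t, ht, rfl⟩ := Multiset.mem_map.mp hy
        rw [le_div_iff₀ hvdpow]
        exact hterm t ht
      have hesymm : v ((R.map fun a => a - φ x).esymm (d-j)) * vd^j ≤ W :=
        (le_div_iff₀ hvdpow).mp hsum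
      rw [hcQ, hcoeffj, hevalv]
      rw [v.map_mul, v.map_mul, map_pow]
      have hneg1 : v (-1 : L) = 1 := by
        rw [Valuation.map_neg, map_one]
      rw [hneg1, one_pow, one_mul, mul_assoc]
      exact mul_le_mul_right hesymm _
  -- strict inequality: nearest root is closer than next radius
  have hnear : ∀ x : ℚ_[p], ‖P.eval x‖ ≤ (p:ℝ)^n →
      v (φ x - z x) < v (φ ((p:ℚ_[p])^(-(K x + 1)))) := by
    intro x hx
    have hfail : ¬ (∀ j : ℕ, 1 ≤ j → j ≤ d →
        ‖((taylor x) P).coeff j‖ * (p:ℝ)^((j:ℤ)*(K x + 1)) ≤ (p:ℝ)^n) := by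
      intro h
      have := hKmax x _ h
      omega
    push_neg at hfail
    obtain ⟨j, hj1, hjd, hgt⟩ := hfail
    set t : ℚ_[p] := (p:ℚ_[p])^(-(K x + 1)) with ht
    have hnt : ‖t‖ = (p:ℝ)^(K x + 1) := by
      rw [ht, Padic.norm_p_zpow, neg_neg]
    have hlt : ‖P.eval x‖ < ‖((taylor x) P).coeff j * t^j‖ := by
      rw [norm_mul, norm_pow, hnt, ← zpow_natCast ((p:ℝ)^(K x+1)) j, ← zpow_mul]
      calc ‖P.eval x‖ ≤ (p:ℝ)^n := hx
        _ < ‖((taylor x) P).coeff j‖ * (p:ℝ)^((j:ℤ)*(K x+1)) := hgt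
        _ = ‖((taylor x) P).coeff j‖ * (p:ℝ)^((K x+1)*(j:ℤ)) := by rw [mul_comm ((j:ℤ)) _]
    have hcj : ((taylor x) P).coeff j ≠ 0 := by
      intro h0
      rw [h0, norm_zero, zero_mul] at hgt
      have : (0:ℝ) < (p:ℝ)^n := by positivity
      linarith
    have hv1 : v (φ (P.eval x)) < v (φ (((taylor x) P).coeff j * t^j)) := (hcmplt _ _).mpr hlt
    rw [map_mul, map_pow, v.map_mul, map_pow] at hv1
    by_contra hge
    push_neg at hge
    have h9 : (v (φ t))^j ≤ (v (φ x - z x))^j := pow_le_pow_left' hge j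
    have h10 : v (φ (((taylor x) P).coeff j)) * (v (φ t))^j ≤ v (φ (P.eval x)) :=
      le_trans (mul_le_mul_right h9 _) (hkey x j hj1 hjd)
    exact absurd hv1 (not_lt.mpr h10)
  -- clustering
  have hclust : ∀ x y : ℚ_[p], ‖P.eval x‖ ≤ (p:ℝ)^n → ‖P.eval y‖ ≤ (p:ℝ)^n →
      z x = z y → K x ≤ K y → ‖x - y‖ ≤ (p:ℝ)^(K y) := by
    intro x y hx hy hz hK
    apply norm_le_step
    have h1 : v (φ (x - y)) < v (φ ((p:ℚ_[p])^(-(K y + 1)))) := by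
      have hxn := hnear x hx
      have hyn := hnear y hy
      have hsub : v (φ (x-y)) ≤ max (v (φ x - z x)) (v (φ y - z y)) := by
        rw [map_sub]
        have h2 : (φ x - φ y) = (φ x - z x) - (φ y - z y) := by
          rw [hz]
          ring
        rw [h2]
        exact v.map_sub _ _
      have hts : v (φ ((p:ℚ_[p])^(-(K x + 1)))) ≤ v (φ ((p:ℚ_[p])^(-(K y + 1)))) := by
        rw [hcmp, Padic.norm_p_zpow, Padic.norm_p_zpow, neg_neg, neg_neg]
        apply zpow_le_zpow_right₀ hp1.le
        omega
      exact lt_of_le_of_lt hsub (max_lt (lt_of_lt_of_le hxn hts) hyn)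
    have h3 := (hcmplt _ _).mp h1
    rwa [Padic.norm_p_zpow, neg_neg] at h3
  -- assemble the cover
  set T : Finset L := R.toFinset.filter
    (fun w => ∃ x : ℚ_[p], ‖P.eval x‖ ≤ (p:ℝ)^n ∧ z x = w) with hT
  have hwit : ∀ w : {w // w ∈ T}, ∃ x0 : ℚ_[p], (‖P.eval x0‖ ≤ (p:ℝ)^n ∧ z x0 = w.1) ∧
      ∀ x' : ℚ_[p], ‖P.eval x'‖ ≤ (p:ℝ)^n → z x' = w.1 → K x' ≤ K x0 := by
    rintro ⟨w, hw⟩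
    rw [hT, Finset.mem_filter] at hw
    obtain ⟨-, x1, hx1, hzx1⟩ := hw
    obtain ⟨kk, ⟨x0, hx0, hKx0⟩, hmax⟩ := Int.exists_greatest_of_bdd
      (P := fun kk => ∃ x0 : ℚ_[p], (‖P.eval x0‖ ≤ (p:ℝ)^n ∧ z x0 = w) ∧ K x0 = kk)
      ⟨|n + P.leadingCoeff.valuation|, by
        rintro zz ⟨x0, -, rfl⟩
        exact hK0 x0 _ (hKgood x0)⟩
      ⟨K x1, x1, ⟨hx1, hzx1⟩, rfl⟩
    refine ⟨x0, hx0, fun x' h1 h2 => ?_⟩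
    rw [hKx0]
    exact hmax (K x') ⟨x', ⟨h1, h2⟩, rfl⟩
  choose xw hxw hxwmax using hwit
  refine ⟨T.card, fun i0 => xw (T.equivFin.symm i0), fun i0 => K (xw (T.equivFin.symm i0)),
    ?_, ?_, ?_⟩
  · calc T.card ≤ R.toFinset.card := Finset.card_filter_le _ _
      _ ≤ Multiset.card R := Multiset.toFinset_card_le _
      _ = d := hcardR
  · intro x hx
    simp only [Set.mem_setOf_eq] at hx
    have hwT : z x ∈ T := by
      rw [hT, Finset.mem_filter]
      exact ⟨hzmem x, x, hx, rfl⟩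
    refine Set.mem_iUnion.mpr ⟨T.equivFin ⟨z x, hwT⟩, ?_⟩
    simp only [Set.mem_setOf_eq, Equiv.symm_apply_apply]
    have hzz : z x = z (xw ⟨z x, hwT⟩) := ((hxw ⟨z x, hwT⟩).2).symm
    exact hclust x (xw ⟨z x, hwT⟩) hx (hxw ⟨z x, hwT⟩).1 hzz
      (hxwmax ⟨z x, hwT⟩ x hx rfl)
  · intro i0 y hy
    exact hderiv _ y hy

end Stmt9Aux

/-- p-adic Bernstein inequality: if `P` is a polynomial of degree `d ≥ 1` over `ℚ_p` and
`r = p^n`, then the sublevel set `Ω = {x : |P(x)|_p ≤ r}` can be covered by `O_d(1)` balls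
`B = {y : |y − c|_p ≤ p^k}` (whose Haar measure is `p^k`) on each of which
`sup_{x∈B} |P'(x)|_p ≲_d r / μ(B) = r / p^k`. -/
theorem stmt9 (d : ℕ) (hd : 1 ≤ d) :
    ∃ (M : ℕ) (C : ℝ), 0 < C ∧
      ∀ (p : ℕ) [Fact p.Prime], ∀ (P : Polynomial ℚ_[p]), P.natDegree = d →
      ∀ n : ℤ,
        ∃ (m : ℕ) (c : Fin m → ℚ_[p]) (k : Fin m → ℤ),
          m ≤ M ∧
          {x : ℚ_[p] | ‖Polynomial.eval x P‖ ≤ (p : ℝ) ^ n} ⊆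
            ⋃ i : Fin m, {y : ℚ_[p] | ‖y - c i‖ ≤ (p : ℝ) ^ (k i)} ∧
          ∀ i : Fin m, ∀ y : ℚ_[p], ‖y - c i‖ ≤ (p : ℝ) ^ (k i) →
            ‖Polynomial.eval y P.derivative‖ ≤ C * (p : ℝ) ^ n / (p : ℝ) ^ (k i) := by
  refine ⟨d, 1, one_pos, ?_⟩
  intro p _ P hP n
  obtain ⟨m, c, k, h1, h2, h3⟩ := Stmt9Aux.key d hd P hP n
  refine ⟨m, c, k, h1, h2, ?_⟩
  intro i y hy
  have := h3 i y hy
  rwa [one_mul]
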